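/- Let α > −1 and let j₁ > j₂ ≥ 0 be real numbers. Then ∫_{tr(j₁,j₂)} ‖x‖^{2α} dx = (1/(2α+2)) ∫_{arctan(j₂/j₁)}^{π/4} [ (j₁/cos θ)^{2α+2} − (j₂/sin θ)^{2α+2} ] dθ. -/

import Mathlib

open MeasureTheory Filter Set Real

noncomputable section

abbrev E2 : Type := EuclideanSpace ℝ (Fin 2)

/-- The triangle `tr(a,b) = {(x₁,x₂) : b ≤ x₁ ≤ a, b ≤ x₂ ≤ x₁}`. -/
def tri (a b : ℝ) : Set E2 :=
  {x : E2 | b ≤ x 0 ∧ x 0 ≤ a ∧ b ≤ x 1 ∧ x 1 ≤ x 0}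

lemma polar_target' : polarCoord.target = Set.Ioi (0:ℝ) ×ˢ Set.Ioo (-π) π := rfl
lemma polar_symm' (p : ℝ × ℝ) :
    polarCoord.symm p = (p.1 * Real.cos p.2, p.1 * Real.sin p.2) := rfl

lemma memiff (j₁ j₂ : ℝ) (hj₂ : 0 ≤ j₂) (hj : j₂ < j₁) (r θ : ℝ) :
    ((r, θ) ∈ polarCoord.target ∧ polarCoord.symm (r, θ) ∈
      {p : ℝ × ℝ | j₂ ≤ p.1 ∧ p.1 ≤ j₁ ∧ j₂ ≤ p.2 ∧ p.2 ≤ p.1}) ↔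
    ((Real.arctan (j₂ / j₁) ≤ θ ∧ θ ≤ π / 4) ∧ 0 < r ∧
      j₂ / Real.sin θ ≤ r ∧ r ≤ j₁ / Real.cos θ) := by
  have hj₁ : 0 < j₁ := lt_of_le_of_lt hj₂ hj
  have hπ := Real.pi_pos
  rw [polar_target', polar_symm']
  simp only [Set.mem_prod, Set.mem_Ioi, Set.mem_Ioo, Set.mem_setOf_eq]
  constructor
  · rintro ⟨⟨hr, hθl, hθr⟩, h1, h2, h3, h4⟩
    have hsin : 0 ≤ Real.sin θ := by
      have h0 : 0 ≤ r * Real.sin θ := le_trans hj₂ h3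
      exact (mul_nonneg_iff_of_pos_left hr).mp h0
    have hsc : Real.sin θ ≤ Real.cos θ := le_of_mul_le_mul_left h4 hr
    have hcos : 0 < Real.cos θ := by
      by_contra hcon
      push_neg at hcon
      nlinarith [Real.sin_sq_add_cos_sq θ]
    have hθ0 : 0 ≤ θ := by
      by_contra hcon
      push_neg at hcon
      exact absurd hsin (not_le.mpr (Real.sin_neg_of_neg_of_neg_pi_lt hcon hθl))
    have hθhalf : θ < π / 2 := by
      by_contra hcon
      push_neg at hcon
      exact absurd hcos (not_lt.mpr
        (Real.cos_nonpos_of_pi_div_two_le_of_le hcon (by linarith)))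
    have hθ4 : θ ≤ π / 4 := by
      by_contra hcon
      push_neg at hcon
      have h := Real.strictAntiOn_cos
        (show (π / 2 - θ) ∈ Set.Icc 0 π from ⟨by linarith, by linarith⟩)
        (show θ ∈ Set.Icc 0 π from ⟨hθ0, by linarith⟩) (by linarith)
      rw [Real.cos_pi_div_two_sub] at h
      linarith
    refine ⟨⟨?_, hθ4⟩, hr, ?_, (le_div_iff₀ hcos).mpr h2⟩
    · have key : j₂ * Real.cos θ ≤ j₁ * Real.sin θ := by nlinarith
      have htan : j₂ / j₁ ≤ Real.tan θ := by
        rw [Real.tan_eq_sin_div_cos]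
        exact (div_le_div_iff₀ hj₁ hcos).mpr (by nlinarith)
      calc Real.arctan (j₂ / j₁) ≤ Real.arctan (Real.tan θ) :=
            Real.arctan_strictMono.monotone htan
        _ = θ := Real.arctan_tan (by linarith) hθhalf
    · rcases hsin.lt_or_eq with hsin' | hsin'
      · rw [div_le_iff₀ hsin']; linarith
      · rw [← hsin', div_zero]; exact hr.le
  · rintro ⟨⟨hθl, hθr⟩, hr, hlo, hhi⟩
    have hθ0 : 0 ≤ θ :=
      le_trans (by rw [← Real.arctan_zero]
                   exact Real.arctan_strictMono.monotone (by positivity)) hθl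
    have hcos : 0 < Real.cos θ :=
      Real.cos_pos_of_mem_Ioo ⟨by linarith, by linarith⟩
    have hsin : 0 ≤ Real.sin θ := Real.sin_nonneg_of_nonneg_of_le_pi hθ0 (by linarith)
    have hsc : Real.sin θ ≤ Real.cos θ := by
      have := Real.cos_le_cos_of_nonneg_of_le_pi hθ0 (by linarith) (by linarith :
        θ ≤ π / 2 - θ)
      rwa [Real.cos_pi_div_two_sub] at this
    have h2 : r * Real.cos θ ≤ j₁ := by
      rw [le_div_iff₀ hcos] at hhi; exact hhi
    have h3 : j₂ ≤ r * Real.sin θ := by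
      rcases hsin.lt_or_eq with hsin' | hsin'
      · rw [div_le_iff₀ hsin'] at hlo; linarith
      · have hθeq : θ = 0 := by
          rw [← Real.sin_eq_zero_iff_of_lt_of_lt (by linarith) (by linarith)]
          exact hsin'.symm
        have : Real.arctan (j₂ / j₁) = 0 := le_antisymm (hθeq ▸ hθl)
          (by rw [← Real.arctan_zero]
              exact Real.arctan_strictMono.monotone (by positivity))
        have hj20 : j₂ = 0 := by
          rcases div_eq_zero_iff.mp (Real.arctan_eq_zero_iff.mp this) with h | h
          · exact h
          · exact absurd h hj₁.ne'
        rw [hj20, ← hsin']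
        positivity
    have h4 : r * Real.sin θ ≤ r * Real.cos θ :=
      mul_le_mul_of_nonneg_left hsc hr.le
    exact ⟨⟨hr, by linarith, by linarith⟩, le_trans h3 h4, h2, h3, h4⟩

lemma transfer (α j₁ j₂ : ℝ) :
    (∫ x in tri j₁ j₂, ‖x‖ ^ (2 * α)) =
    ∫ p in {p : ℝ × ℝ | j₂ ≤ p.1 ∧ p.1 ≤ j₁ ∧ j₂ ≤ p.2 ∧ p.2 ≤ p.1},
      (p.1 ^ 2 + p.2 ^ 2) ^ α := by
  set S : Set (ℝ × ℝ) := {p : ℝ × ℝ | j₂ ≤ p.1 ∧ p.1 ≤ j₁ ∧ j₂ ≤ p.2 ∧ p.2 ≤ p.1}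
  set e : E2 ≃ᵐ (ℝ × ℝ) :=
    (MeasurableEquiv.toLp 2 (Fin 2 → ℝ)).symm.trans (MeasurableEquiv.finTwoArrow)
  have he : MeasurePreserving e volume volume :=
    (volume_preserving_finTwoArrow ℝ).comp
      (EuclideanSpace.volume_preserving_symm_measurableEquiv_toLp (Fin 2))
  have hpre : e ⁻¹' S = tri j₁ j₂ := by
    ext x
    simp [e, S, tri, MeasurableEquiv.finTwoArrow, MeasurableEquiv.toLp_symm_apply,
      MeasurableEquiv.trans]
  rw [← he.setIntegral_preimage_emb e.measurableEmbedding, hpre]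
  have hStri : MeasurableSet (tri j₁ j₂) := by
    rw [← hpre]
    refine e.measurable ?_
    have : S = {p : ℝ × ℝ | j₂ ≤ p.1} ∩ {p | p.1 ≤ j₁} ∩ {p | j₂ ≤ p.2} ∩ {p | p.2 ≤ p.1} := by
      ext p; simp only [S, mem_setOf_eq, mem_inter_iff]; tauto
    rw [this]
    exact (((measurableSet_le measurable_const measurable_fst).inter
      (measurableSet_le measurable_fst measurable_const)).inter
      (measurableSet_le measurable_const measurable_snd)).inter
      (measurableSet_le measurable_snd measurable_fst)
  apply setIntegral_congr_fun hStri
  intro x _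
  dsimp only
  have hx : e x = (x 0, x 1) := by
    simp [e, MeasurableEquiv.finTwoArrow, MeasurableEquiv.toLp_symm_apply,
      MeasurableEquiv.trans]
  rw [hx]
  have hnorm : ‖x‖ = Real.sqrt ((x 0) ^ 2 + (x 1) ^ 2) := by
    rw [EuclideanSpace.norm_eq]
    simp [Fin.sum_univ_two, Real.norm_eq_abs, sq_abs]
  rw [hnorm]
  have h0 : (0:ℝ) ≤ (x 0) ^ 2 + (x 1) ^ 2 := by positivity
  rw [Real.rpow_mul (Real.sqrt_nonneg _)]
  congr 1
  rw [show ((2:ℝ)) = ((2:ℕ):ℝ) by norm_num, Real.rpow_natCast, Real.sq_sqrt h0]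

theorem stmt14 (α : ℝ) (hα : -1 < α) (j₁ j₂ : ℝ) (hj₂ : 0 ≤ j₂) (hj : j₂ < j₁) :
    (∫ x in tri j₁ j₂, ‖x‖ ^ (2 * α)) =
      (1 / (2 * α + 2)) * ∫ θ in Real.arctan (j₂ / j₁)..(π / 4),
        ((j₁ / Real.cos θ) ^ (2 * α + 2) - (j₂ / Real.sin θ) ^ (2 * α + 2)) := by
  have hj₁ : 0 < j₁ := lt_of_le_of_lt hj₂ hj
  have hπ := Real.pi_pos
  have hc : (0:ℝ) < 2 * α + 2 := by linarith
  set θ₀ := Real.arctan (j₂ / j₁) with hθ₀def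
  have hθ₀0 : 0 ≤ θ₀ := by
    rw [hθ₀def, ← Real.arctan_zero]
    exact Real.arctan_strictMono.monotone (by positivity)
  have hθ₀lt : θ₀ < π / 4 := by
    rw [hθ₀def, ← Real.arctan_one]
    exact Real.arctan_strictMono ((div_lt_one hj₁).mpr hj)
  set S : Set (ℝ × ℝ) := {p : ℝ × ℝ | j₂ ≤ p.1 ∧ p.1 ≤ j₁ ∧ j₂ ≤ p.2 ∧ p.2 ≤ p.1} with hSdef
  have hS : MeasurableSet S := by
    have : S = {p : ℝ × ℝ | j₂ ≤ p.1} ∩ {p | p.1 ≤ j₁} ∩ {p | j₂ ≤ p.2} ∩ {p | p.2 ≤ p.1} := by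
      ext p; simp only [hSdef, mem_setOf_eq, mem_inter_iff]; tauto
    rw [this]
    exact (((measurableSet_le measurable_const measurable_fst).inter
      (measurableSet_le measurable_fst measurable_const)).inter
      (measurableSet_le measurable_const measurable_snd)).inter
      (measurableSet_le measurable_snd measurable_fst)
  set g : ℝ × ℝ → ℝ := fun p => (p.1 ^ 2 + p.2 ^ 2) ^ α with hgdef
  set A : Set (ℝ × ℝ) := {p : ℝ × ℝ | (θ₀ ≤ p.2 ∧ p.2 ≤ π / 4) ∧ 0 < p.1 ∧
    j₂ / Real.sin p.2 ≤ p.1 ∧ p.1 ≤ j₁ / Real.cos p.2} with hAdef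
  have hAmeas : MeasurableSet A := by
    have : A = ({p : ℝ × ℝ | θ₀ ≤ p.2} ∩ {p | p.2 ≤ π / 4}) ∩ ({p | 0 < p.1} ∩
        ({p | j₂ / Real.sin p.2 ≤ p.1} ∩ {p | p.1 ≤ j₁ / Real.cos p.2})) := by
      ext p; simp only [hAdef, mem_setOf_eq, mem_inter_iff]; try tauto
    rw [this]
    refine MeasurableSet.inter (MeasurableSet.inter ?_ ?_)
      (MeasurableSet.inter ?_ (MeasurableSet.inter ?_ ?_))
    · exact measurableSet_le measurable_const measurable_snd
    · exact measurableSet_le measurable_snd measurable_const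
    · exact measurableSet_lt measurable_const measurable_fst
    · exact measurableSet_le (measurable_const.div (Real.measurable_sin.comp measurable_snd))
        measurable_fst
    · exact measurableSet_le measurable_fst
        (measurable_const.div (Real.measurable_cos.comp measurable_snd))
  set φ : ℝ × ℝ → ℝ := fun p => p.1 ^ (2 * α + 1) with hφdef
  have hφmeas : Measurable φ := by fun_prop
  -- pointwise indicator identity
  have hpt : ∀ p : ℝ × ℝ,
      polarCoord.target.indicator (fun p => p.1 • S.indicator g (polarCoord.symm p)) p
        = A.indicator φ p := by
    rintro ⟨r, θ⟩
    by_cases hp : (r, θ) ∈ A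
    · obtain ⟨htgt, hmem⟩ := (memiff j₁ j₂ hj₂ hj r θ).mpr hp
      rw [indicator_of_mem htgt, indicator_of_mem hp, indicator_of_mem hmem]
      have hr : 0 < r := hp.2.1
      rw [polar_symm']
      have e1 : (r * Real.cos θ) ^ 2 + (r * Real.sin θ) ^ 2 = r ^ 2 := by
        have h := Real.sin_sq_add_cos_sq θ
        calc (r * Real.cos θ) ^ 2 + (r * Real.sin θ) ^ 2
            = r ^ 2 * (Real.sin θ ^ 2 + Real.cos θ ^ 2) := by ring
          _ = r ^ 2 := by rw [h]; ring
      show r • ((r * Real.cos θ) ^ 2 + (r * Real.sin θ) ^ 2) ^ α = r ^ (2 * α + 1)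
      rw [e1, smul_eq_mul, ← Real.rpow_natCast r 2, ← Real.rpow_mul hr.le,
        Real.rpow_add_one hr.ne']
      norm_num [mul_comm]
    · rw [indicator_of_notMem hp]
      by_cases htgt : (r, θ) ∈ polarCoord.target
      · rw [indicator_of_mem htgt]
        have hmem : polarCoord.symm (r, θ) ∉ S := fun h =>
          hp ((memiff j₁ j₂ hj₂ hj r θ).mp ⟨htgt, h⟩)
        rw [indicator_of_notMem hmem, smul_zero]
      · rw [indicator_of_notMem htgt]
  -- integrability
  have hint : Integrable (A.indicator φ) := by
    have hsqrt2 : (1:ℝ) ≤ Real.sqrt 2 := by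
      nlinarith [Real.sq_sqrt (by norm_num : (0:ℝ) ≤ 2), Real.sqrt_nonneg 2]
    have hψ : Integrable (fun p : ℝ × ℝ =>
        (Ioc (0:ℝ) (2 * j₁)).indicator (fun r => r ^ (2 * α + 1)) p.1 *
        (Icc θ₀ (π / 4)).indicator (fun _ => (1:ℝ)) p.2) := by
      rw [Measure.volume_eq_prod ℝ ℝ]
      apply Integrable.mul_prod
      · rw [integrable_indicator_iff measurableSet_Ioc]
        exact (intervalIntegral.intervalIntegrable_rpow' (by linarith : (-1:ℝ) < 2 * α + 1)).1
      · rw [integrable_indicator_iff measurableSet_Icc]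
        exact integrableOn_const measure_Icc_lt_top.ne
    apply Integrable.mono' hψ ((hφmeas.indicator hAmeas).aestronglyMeasurable)
    filter_upwards with p
    by_cases hp : p ∈ A
    · obtain ⟨⟨hθl, hθr⟩, hr, -, hhi⟩ := id hp
      have hθ0 : 0 ≤ p.2 := le_trans hθ₀0 hθl
      have hcos2 : Real.cos (π / 4) ≤ Real.cos p.2 :=
        Real.cos_le_cos_of_nonneg_of_le_pi hθ0 (by linarith) hθr
      rw [Real.cos_pi_div_four] at hcos2
      have hcoshalf : (1:ℝ) / 2 ≤ Real.cos p.2 := by linarith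
      have hcos : (0:ℝ) < Real.cos p.2 := by linarith
      have hp1 : p.1 ≤ 2 * j₁ := by
        have : j₁ / Real.cos p.2 ≤ 2 * j₁ := by
          rw [div_le_iff₀ hcos]; nlinarith
        linarith
      rw [indicator_of_mem hp]
      rw [indicator_of_mem (show p.1 ∈ Ioc (0:ℝ) (2 * j₁) from ⟨hr, hp1⟩),
        indicator_of_mem (show p.2 ∈ Icc θ₀ (π / 4) from ⟨hθl, hθr⟩)]
      rw [Real.norm_eq_abs, abs_of_nonneg (Real.rpow_nonneg hr.le _), mul_one]
    · rw [indicator_of_notMem hp, norm_zero]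
      apply mul_nonneg
      · apply indicator_nonneg
        intro r hrr
        exact Real.rpow_nonneg hrr.1.le _
      · apply indicator_nonneg
        intro _ _
        norm_num
  -- inner integral computation
  have inner : ∀ θ : ℝ, (∫ r, A.indicator φ (r, θ)) =
      (Icc θ₀ (π / 4)).indicator (fun θ => (1 / (2 * α + 2)) *
        ((j₁ / Real.cos θ) ^ (2 * α + 2) - (j₂ / Real.sin θ) ^ (2 * α + 2))) θ := by
    intro θ
    by_cases hθ : θ ∈ Icc θ₀ (π / 4)
    · obtain ⟨hθl, hθr⟩ := hθ
      have hθ0 : 0 ≤ θ := le_trans hθ₀0 hθl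
      have hcos : 0 < Real.cos θ :=
        Real.cos_pos_of_mem_Ioo ⟨by linarith, by linarith⟩
      have hsin : 0 ≤ Real.sin θ := Real.sin_nonneg_of_nonneg_of_le_pi hθ0 (by linarith)
      set lo := j₂ / Real.sin θ with hlodef
      set hi := j₁ / Real.cos θ with hhidef
      have hhi : 0 < hi := div_pos hj₁ hcos
      have hlo0 : 0 ≤ lo := div_nonneg hj₂ hsin
      have hlohi : lo ≤ hi := by
        have htan : j₂ / j₁ ≤ Real.tan θ := by
          have hmono := Real.strictMonoOn_tan.monotoneOn
            (show θ₀ ∈ Ioo (-(π/2)) (π/2) from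
              ⟨Real.neg_pi_div_two_lt_arctan _, Real.arctan_lt_pi_div_two _⟩)
            (show θ ∈ Ioo (-(π/2)) (π/2) from ⟨by linarith, by linarith⟩) hθl
          rwa [hθ₀def, Real.tan_arctan] at hmono
        rcases hsin.lt_or_eq with hsin' | hsin'
        · rw [Real.tan_eq_sin_div_cos] at htan
          rw [hlodef, hhidef, div_le_div_iff₀ hsin' hcos]
          have := (div_le_div_iff₀ hj₁ hcos).mp htan
          nlinarith
        · rw [hlodef, ← hsin', div_zero]; exact hhi.le
      have hset : ∀ r : ℝ, A.indicator φ (r, θ) =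
          ({r : ℝ | 0 < r ∧ lo ≤ r ∧ r ≤ hi}).indicator (fun r => r ^ (2 * α + 1)) r := by
        intro r
        by_cases hr : 0 < r ∧ lo ≤ r ∧ r ≤ hi
        · rw [indicator_of_mem
            (show r ∈ {r : ℝ | 0 < r ∧ lo ≤ r ∧ r ≤ hi} from hr), indicator_of_mem
            (show (r, θ) ∈ A from ⟨⟨hθl, hθr⟩, hr.1, hr.2.1, hr.2.2⟩)]
        · rw [indicator_of_notMem
            (show r ∉ {r : ℝ | 0 < r ∧ lo ≤ r ∧ r ≤ hi} from hr), indicator_of_notMem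
            (show (r, θ) ∉ A from fun h => hr ⟨h.2.1, h.2.2⟩)]
      rw [indicator_of_mem (show θ ∈ Icc θ₀ (π / 4) from ⟨hθl, hθr⟩)]
      have hint2 : (∫ r, A.indicator φ (r, θ)) =
          ∫ r, ({r : ℝ | 0 < r ∧ lo ≤ r ∧ r ≤ hi}).indicator (fun r => r ^ (2 * α + 1)) r :=
        integral_congr_ae (Eventually.of_forall hset)
      rw [hint2]
      rcases hlo0.lt_or_eq with hlo' | hlo'
      · have hseteq : {r : ℝ | 0 < r ∧ lo ≤ r ∧ r ≤ hi} = Icc lo hi := by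
          ext r
          simp only [mem_setOf_eq, mem_Icc]
          exact ⟨fun h => ⟨h.2.1, h.2.2⟩, fun h => ⟨lt_of_lt_of_le hlo' h.1, h.1, h.2⟩⟩
        rw [hseteq, integral_indicator measurableSet_Icc, integral_Icc_eq_integral_Ioc,
          ← intervalIntegral.integral_of_le hlohi,
          integral_rpow (Or.inl (by linarith : (-1:ℝ) < 2 * α + 1))]
        rw [show 2 * α + 1 + 1 = 2 * α + 2 by ring]
        ring
      · have hseteq : {r : ℝ | 0 < r ∧ lo ≤ r ∧ r ≤ hi} = Ioc 0 hi := by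
          ext r
          simp only [mem_setOf_eq, mem_Ioc]
          exact ⟨fun h => ⟨h.1, h.2.2⟩, fun h => ⟨h.1, by rw [← hlo']; exact h.1.le, h.2⟩⟩
        rw [hseteq, integral_indicator measurableSet_Ioc,
          ← intervalIntegral.integral_of_le hhi.le,
          integral_rpow (Or.inl (by linarith : (-1:ℝ) < 2 * α + 1))]
        rw [show 2 * α + 1 + 1 = 2 * α + 2 by ring, ← hlodef, ← hlo',
          Real.zero_rpow hc.ne']
        ring
    · rw [indicator_of_notMem hθ]
      have hz : ∀ r : ℝ, A.indicator φ (r, θ) = 0 := fun r =>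
        indicator_of_notMem (fun hmem => hθ ⟨hmem.1.1, hmem.1.2⟩) _
      simp only [hz, integral_zero]
  -- assembling
  calc (∫ x in tri j₁ j₂, ‖x‖ ^ (2 * α))
      = ∫ p in S, g p := transfer α j₁ j₂
    _ = ∫ p, S.indicator g p := (integral_indicator hS).symm
    _ = ∫ p in polarCoord.target, p.1 • S.indicator g (polarCoord.symm p) :=
        (integral_comp_polarCoord_symm _).symm
    _ = ∫ p, A.indicator φ p := by
        rw [← integral_indicator polarCoord.open_target.measurableSet]
        exact integral_congr_ae (Eventually.of_forall hpt)
    _ = ∫ θ, ∫ r, A.indicator φ (r, θ) := by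
        rw [Measure.volume_eq_prod ℝ ℝ]
        exact integral_prod_symm _ (by rwa [← Measure.volume_eq_prod ℝ ℝ])
    _ = ∫ θ, (Icc θ₀ (π / 4)).indicator (fun θ => (1 / (2 * α + 2)) *
          ((j₁ / Real.cos θ) ^ (2 * α + 2) - (j₂ / Real.sin θ) ^ (2 * α + 2))) θ :=
        integral_congr_ae (Eventually.of_forall inner)
    _ = ∫ θ in Icc θ₀ (π / 4), (1 / (2 * α + 2)) *
          ((j₁ / Real.cos θ) ^ (2 * α + 2) - (j₂ / Real.sin θ) ^ (2 * α + 2)) :=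
        integral_indicator measurableSet_Icc
    _ = ∫ θ in Ioc θ₀ (π / 4), (1 / (2 * α + 2)) *
          ((j₁ / Real.cos θ) ^ (2 * α + 2) - (j₂ / Real.sin θ) ^ (2 * α + 2)) :=
        integral_Icc_eq_integral_Ioc
    _ = ∫ θ in θ₀..(π / 4), (1 / (2 * α + 2)) *
          ((j₁ / Real.cos θ) ^ (2 * α + 2) - (j₂ / Real.sin θ) ^ (2 * α + 2)) :=
        (intervalIntegral.integral_of_le hθ₀lt.le).symm
    _ = (1 / (2 * α + 2)) * ∫ θ in θ₀..(π / 4),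
          ((j₁ / Real.cos θ) ^ (2 * α + 2) - (j₂ / Real.sin θ) ^ (2 * α + 2)) :=
        intervalIntegral.integral_const_mul _ _
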